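/- With the setup of the Reconstruction Theorem, let w = (w_1,…,w_n)ᵀ be any vector orthogonal to the μ-eigenspace E(μ) of A, and let q = (w_{k+1},…,w_n)ᵀ be its restriction to the star complement coordinates. Then ⟨s_u, q⟩ = −w_u for all 1 ≤ u ≤ n, where ⟨x,y⟩ = xᵀ(μI−C)⁻¹y and s_u are the columns of S = (B | C − μI). -/

import Mathlib

open Matrix

/-- The bilinear form `⟨x, y⟩ = xᵀ (μI - C)⁻¹ y` associated with a star complement. -/
noncomputable def starBilin {t : ℕ} (μ : ℝ) (C : Matrix (Fin t) (Fin t) ℝ) (x y : Fin t → ℝ) : ℝ :=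
  x ⬝ᵥ ((μ • (1 : Matrix (Fin t) (Fin t) ℝ) - C)⁻¹).mulVec y

theorem orthogonal_vector_lemma {k t : ℕ}
    (AS : Matrix (Fin k) (Fin k) ℝ) (B : Matrix (Fin t) (Fin k) ℝ)
    (C : Matrix (Fin t) (Fin t) ℝ)
    (A : Matrix (Fin k ⊕ Fin t) (Fin k ⊕ Fin t) ℝ)
    (hA : A = Matrix.fromBlocks AS Bᵀ B C)
    (hsymm : A.IsSymm)
    (μ : ℝ)
    (hC : ¬ ∃ v : Fin t → ℝ, v ≠ 0 ∧ C.mulVec v = μ • v)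
    (hrec : μ • (1 : Matrix (Fin k) (Fin k) ℝ) - AS =
      Bᵀ * (μ • (1 : Matrix (Fin t) (Fin t) ℝ) - C)⁻¹ * B)
    (S : Matrix (Fin t) (Fin k ⊕ Fin t) ℝ)
    (hS : S = Matrix.fromCols B (C - μ • (1 : Matrix (Fin t) (Fin t) ℝ)))
    (w : (Fin k ⊕ Fin t) → ℝ)
    (hw : ∀ v : (Fin k ⊕ Fin t) → ℝ, A.mulVec v = μ • v → w ⬝ᵥ v = 0)
    (q : Fin t → ℝ) (hq : q = fun i => w (Sum.inr i)) :
    ∀ u : Fin k ⊕ Fin t, starBilin μ C (fun i => S i u) q = - w u := by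
  set M : Matrix (Fin t) (Fin t) ℝ := μ • (1 : Matrix (Fin t) (Fin t) ℝ) - C with hM
  -- C is symmetric
  have hCsym : Cᵀ = C := by
    have h := hsymm
    rw [Matrix.IsSymm, hA, Matrix.fromBlocks_transpose] at h
    ext i j
    have := congrFun (congrFun h (Sum.inr i)) (Sum.inr j)
    simpa using this
  have hMsym : Mᵀ = M := by
    rw [hM, Matrix.transpose_sub, Matrix.transpose_smul, Matrix.transpose_one, hCsym]
  -- M is invertible
  have hMdet : IsUnit M.det := by
    rw [isUnit_iff_ne_zero]
    intro h
    obtain ⟨v, hv0, hv⟩ := (Matrix.exists_mulVec_eq_zero_iff).mpr h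
    refine hC ⟨v, hv0, ?_⟩
    rw [hM, Matrix.sub_mulVec, Matrix.smul_mulVec, Matrix.one_mulVec,
      sub_eq_zero] at hv
    exact hv.symm
  have hMM : M * M⁻¹ = 1 := Matrix.mul_nonsing_inv M hMdet
  have hMinvsym : (M⁻¹)ᵀ = M⁻¹ := by
    rw [Matrix.transpose_nonsing_inv, hMsym]
  -- key orthogonality consequence
  have key : ∀ p : Fin k → ℝ,
      (fun i => w (Sum.inl i)) ⬝ᵥ p + q ⬝ᵥ (M⁻¹.mulVec (B.mulVec p)) = 0 := by
    intro p
    set r : Fin t → ℝ := M⁻¹.mulVec (B.mulVec p) with hr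
    have hev : A.mulVec (Sum.elim p r) = μ • Sum.elim p r := by
      rw [hA, Matrix.fromBlocks_mulVec]
      have htop : AS.mulVec p + Bᵀ.mulVec r = μ • p := by
        have h1 := congrArg (fun X => Matrix.mulVec X p) hrec
        simp only [Matrix.sub_mulVec, Matrix.smul_mulVec, Matrix.one_mulVec,
          ← Matrix.mulVec_mulVec] at h1
        rw [← h1]
        abel
      have hbot : B.mulVec p + C.mulVec r = μ • r := by
        have h2 : M.mulVec r = B.mulVec p := by
          rw [hr, Matrix.mulVec_mulVec, Matrix.mulVec_mulVec, hMM, Matrix.one_mul]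
        rw [hM, Matrix.sub_mulVec, Matrix.smul_mulVec, Matrix.one_mulVec] at h2
        have := sub_eq_iff_eq_add.mp h2
        rw [this]
      simp only [Sum.elim_comp_inl, Sum.elim_comp_inr]
      funext x
      cases x with
      | inl i => simpa using congrFun htop i
      | inr i => simpa using congrFun hbot i
    have := hw _ hev
    simpa [dotProduct, Fintype.sum_sum_type, hq, hr] using this
  intro u
  rcases u with j | i
  · -- star set column: column j of B
    have hcol : (fun i => S i (Sum.inl j)) = B.mulVec (Pi.single j 1) := by
      funext i
      rw [hS]
      simp [Matrix.fromCols_apply_inl, Matrix.mulVec_single]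
    have hkey := key (Pi.single j 1)
    have h1 : (fun i => w (Sum.inl i)) ⬝ᵥ Pi.single j 1 = w (Sum.inl j) := by
      simp [dotProduct, Pi.single_apply]
    rw [h1] at hkey
    have hswap : starBilin μ C (fun i => S i (Sum.inl j)) q
        = q ⬝ᵥ M⁻¹.mulVec (B.mulVec (Pi.single j 1)) := by
      rw [starBilin, hcol, ← hM]
      rw [Matrix.dotProduct_mulVec, ← Matrix.mulVec_transpose, hMinvsym,
        dotProduct_comm]
    rw [hswap]
    linarith
  · -- star complement column: column i of C - μI = -(column i of M)
    have hcol : (fun j => S j (Sum.inr i)) = -(M.mulVec (Pi.single i 1)) := by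
      funext j
      rw [hS, hM]
      simp [Matrix.fromCols_apply_inr, Matrix.mulVec_single]
    rw [starBilin, hcol, ← hM]
    rw [neg_dotProduct, Matrix.dotProduct_mulVec, ← Matrix.mulVec_transpose,
      hMinvsym, Matrix.mulVec_mulVec, Matrix.nonsing_inv_mul M hMdet, Matrix.one_mulVec]
    rw [hq]
    simp [dotProduct, Pi.single_apply]
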